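/- Let R be a commutative ring, A a commutative R-algebra, and L an A-module such that the canonical double-dual map L → Hom_A(Hom_A(L,A), A) is injective. Suppose (⁅·,·⁆, θ) and (⁅·,·⁆', θ') are two Lie–Rinehart algebra structures on (A, L) whose CCE operators agree in degrees 0 and 1, that is: θ(α)(a) = θ'(α)(a) for all α ∈ L and a ∈ A, and for every A-linear φ : L → A and all α, β ∈ L, θ(α)(φ(β)) − θ(β)(φ(α)) − φ(⁅α,β⁆) = θ'(α)(φ(β)) − θ'(β)(φ(α)) − φ(⁅α,β⁆'). Then the two structures coincide: θ = θ' and ⁅α,β⁆ = ⁅α,β⁆' for all α, β ∈ L. -/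
import Mathlib


/-- If the canonical map from `L` to its double `A`-dual is injective, two Lie–Rinehart
algebra structures `(⁅·,·⁆, θ)` and `(⁅·,·⁆', θ')` on `(A, L)` whose CCE operators agree
in degrees `0` and `1` coincide. -/
theorem lieRinehart_structure_unique {R A L : Type*} [CommRing R] [CommRing A] [Algebra R A]
    [AddCommGroup L] [Module R L] [Module A L] [IsScalarTower R A L]
    (hinj : Function.Injective (Module.Dual.eval A L))
    (br br' : L →ₗ[R] L →ₗ[R] L) (θ θ' : L →ₗ[R] Derivation R A A)
    -- the Lie–Rinehart axioms for `(br, θ)`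
    (halt : ∀ x : L, br x x = 0)
    (hjac : ∀ x y z : L, br (br x y) z + br (br y z) x + br (br z x) y = 0)
    (hθA : ∀ (a : A) (α : L) (b : A), θ (a • α) b = a * θ α b)
    (hcompat : ∀ α β : L, θ (br α β) = ⁅θ α, θ β⁆)
    (hleib : ∀ (α β : L) (a : A), br α (a • β) = a • br α β + θ α a • β)
    -- the Lie–Rinehart axioms for `(br', θ')`
    (halt' : ∀ x : L, br' x x = 0)
    (hjac' : ∀ x y z : L, br' (br' x y) z + br' (br' y z) x + br' (br' z x) y = 0)
    (hθA' : ∀ (a : A) (α : L) (b : A), θ' (a • α) b = a * θ' α b)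
    (hcompat' : ∀ α β : L, θ' (br' α β) = ⁅θ' α, θ' β⁆)
    (hleib' : ∀ (α β : L) (a : A), br' α (a • β) = a • br' α β + θ' α a • β)
    -- agreement of the CCE operators in degree 0
    (h0 : ∀ (α : L) (a : A), θ α a = θ' α a)
    -- agreement of the CCE operators in degree 1
    (h1 : ∀ (φ : L →ₗ[A] A) (α β : L),
        θ α (φ β) - θ β (φ α) - φ (br α β) =
          θ' α (φ β) - θ' β (φ α) - φ (br' α β)) :
    θ = θ' ∧ ∀ α β : L, br α β = br' α β := by
  constructor
  · ext α a
    exact h0 α a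
  · intro α β
    apply hinj
    ext φ
    simp only [Module.Dual.eval_apply]
    have := h1 φ α β
    rw [h0 α (φ β), h0 β (φ α)] at this
    linear_combination -this
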